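/- Second-best composition distortion (discrimination case): let λ ∈ (0,1) and c > 0. Define the first-best objective F(n0,n1) = λ·V_S(n0,n1) + (1−λ)·V_L(n0,n1) − c·(n0+n1) and the second-best (discrimination) objective G(n0,n1) = λ·V_S(n0,n1) + (1−λ)·V_L(n0,0) − c·(n0+n1), both on [0,∞)×[0,∞). Suppose (n0*, n1*) maximizes F over [0,∞)×[0,∞) with n0* > 0 and n1* > 0, and (n0', n1') maximizes G over [0,∞)×[0,∞) with n0' > 0 and n1' > 0. Then n0' > n0* and n1' < n1*. -/

import Mathlib

/-- The denominator `D(n0,n1) = σ²(n0+n1+2 n0 n1) + (1+n0)(1+n1)`. -/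
noncomputable def Dden (σ n0 n1 : ℝ) : ℝ :=
  σ^2 * (n0 + n1 + 2*n0*n1) + (1+n0)*(1+n1)

/-- Forecaster value `V_L`. -/
noncomputable def VL (σ n0 n1 : ℝ) : ℝ :=
  σ^4 * (n0 + n1 + 2*n0*n1) / Dden σ n0 n1

/-- Nowcaster value `V_S`. -/
noncomputable def VS (σ n0 n1 : ℝ) : ℝ :=
  VL σ n0 n1 + (3*σ^2*n0*n1 + 2*σ^2*n1 + n1 + n0*n1) / Dden σ n0 n1

/-- Second-best composition distortion (discrimination case): relative to the
first best, the second-best database has more historical and less current data. -/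
noncomputable def Aval (σ x : ℝ) : ℝ :=
  σ^4*(1+x)^2 + ((1+x)+σ^2*(2+3*x))*(σ^2*x+1+x)

lemma Dpos (σ n0 n1 : ℝ) (h0 : 0 ≤ n0) (h1 : 0 ≤ n1) : 0 < Dden σ n0 n1 := by
  unfold Dden; nlinarith [sq_nonneg σ, mul_nonneg h0 h1, sq_nonneg (σ*n0), sq_nonneg (σ*n1)]

lemma hasDerivAt_linear_div (p q r w x : ℝ) (h : r*x + w ≠ 0) :
    HasDerivAt (fun z : ℝ => (p*z+q)/(r*z+w)) ((p*(r*x+w) - (p*x+q)*r)/(r*x+w)^2) x := by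
  have h1 : HasDerivAt (fun z : ℝ => p*z+q) p x := by
    simpa using ((hasDerivAt_id x).const_mul p).add_const q
  have h2 : HasDerivAt (fun z : ℝ => r*z+w) r x := by
    simpa using ((hasDerivAt_id x).const_mul r).add_const w
  exact h1.div h2 h

/-- derivative of `VL σ n0 ·` -/
lemma hdVL1 (σ n0 y : ℝ) (h : Dden σ n0 y ≠ 0) :
    HasDerivAt (fun z => VL σ n0 z) (σ^4*(1+n0)^2/(Dden σ n0 y)^2) y := by
  have hD : (σ^2*(1+2*n0)+(1+n0))*y + (σ^2*n0+(1+n0)) = Dden σ n0 y := by unfold Dden; ring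
  have h' : (σ^2*(1+2*n0)+(1+n0))*y + (σ^2*n0+(1+n0)) ≠ 0 := by rw [hD]; exact h
  have H := hasDerivAt_linear_div (σ^4*(1+2*n0)) (σ^4*n0) (σ^2*(1+2*n0)+(1+n0))
      (σ^2*n0+(1+n0)) y h'
  have hf : (fun z => VL σ n0 z)
      = (fun z : ℝ => ((σ^4*(1+2*n0))*z + σ^4*n0)/((σ^2*(1+2*n0)+(1+n0))*z + (σ^2*n0+(1+n0)))) := by
    funext z; unfold VL Dden; ring
  rw [hf]
  convert H using 1
  rw [← hD]; ring

/-- derivative of `VL σ · y` -/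
lemma hdVL0 (σ y x : ℝ) (h : Dden σ x y ≠ 0) :
    HasDerivAt (fun z => VL σ z y) (σ^4*(1+y)^2/(Dden σ x y)^2) x := by
  have hD : (σ^2*(1+2*y)+(1+y))*x + (σ^2*y+(1+y)) = Dden σ x y := by unfold Dden; ring
  have h' : (σ^2*(1+2*y)+(1+y))*x + (σ^2*y+(1+y)) ≠ 0 := by rw [hD]; exact h
  have H := hasDerivAt_linear_div (σ^4*(1+2*y)) (σ^4*y) (σ^2*(1+2*y)+(1+y))
      (σ^2*y+(1+y)) x h'
  have hf : (fun z => VL σ z y)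
      = (fun z : ℝ => ((σ^4*(1+2*y))*z + σ^4*y)/((σ^2*(1+2*y)+(1+y))*z + (σ^2*y+(1+y)))) := by
    funext z; unfold VL Dden; ring
  rw [hf]
  convert H using 1
  rw [← hD]; ring

/-- derivative of `VS σ n0 ·` -/
lemma hdVS1 (σ n0 y : ℝ) (h : Dden σ n0 y ≠ 0) :
    HasDerivAt (fun z => VS σ n0 z) (Aval σ n0/(Dden σ n0 y)^2) y := by
  have hD : (σ^2*(1+2*n0)+(1+n0))*y + (σ^2*n0+(1+n0)) = Dden σ n0 y := by unfold Dden; ring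
  have h' : (σ^2*(1+2*n0)+(1+n0))*y + (σ^2*n0+(1+n0)) ≠ 0 := by rw [hD]; exact h
  have H := hasDerivAt_linear_div (σ^4*(1+2*n0) + (3*σ^2*n0+2*σ^2+1+n0)) (σ^4*n0)
      (σ^2*(1+2*n0)+(1+n0)) (σ^2*n0+(1+n0)) y h'
  have hf : (fun z => VS σ n0 z)
      = (fun z : ℝ => ((σ^4*(1+2*n0) + (3*σ^2*n0+2*σ^2+1+n0))*z + σ^4*n0)
          /((σ^2*(1+2*n0)+(1+n0))*z + (σ^2*n0+(1+n0)))) := by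
    funext z; unfold VS VL Dden
    rw [← add_div]
    ring
  rw [hf]
  convert H using 1
  rw [← hD]; unfold Aval; ring

/-- derivative of `VS σ · y` -/
lemma hdVS0 (σ y x : ℝ) (h : Dden σ x y ≠ 0) :
    HasDerivAt (fun z => VS σ z y) (σ^4/(Dden σ x y)^2) x := by
  have hD : (σ^2*(1+2*y)+(1+y))*x + (σ^2*y+(1+y)) = Dden σ x y := by unfold Dden; ring
  have h' : (σ^2*(1+2*y)+(1+y))*x + (σ^2*y+(1+y)) ≠ 0 := by rw [hD]; exact h
  have H := hasDerivAt_linear_div (σ^4*(1+2*y) + (3*σ^2*y+y)) (σ^4*y + (2*σ^2*y+y))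
      (σ^2*(1+2*y)+(1+y)) (σ^2*y+(1+y)) x h'
  have hf : (fun z => VS σ z y)
      = (fun z : ℝ => ((σ^4*(1+2*y) + (3*σ^2*y+y))*z + (σ^4*y + (2*σ^2*y+y)))
          /((σ^2*(1+2*y)+(1+y))*z + (σ^2*y+(1+y)))) := by
    funext z; unfold VS VL Dden
    rw [← add_div]
    ring
  rw [hf]
  convert H using 1
  rw [← hD]; ring

/-- `A(x)/D(x,y)²` is strictly decreasing in `x`. -/
lemma ratio_mono (σ x0 x1 y : ℝ) (hσ : 0 < σ) (h0 : 0 ≤ x0) (hy : 0 ≤ y) (hx : x0 < x1) :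
    Aval σ x1 * (Dden σ x0 y)^2 < Aval σ x0 * (Dden σ x1 y)^2 := by
  have h1 : 0 ≤ x1 := le_of_lt (lt_of_le_of_lt h0 hx)
  have ht : 0 < σ^2 := by positivity
  set t := σ^2 with htdef
  have key : Aval σ x0 * (Dden σ x1 y)^2 - Aval σ x1 * (Dden σ x0 y)^2
      = (x1 - x0) * (2*t*t + 2*t*t*y + 2*t*t*x1 + 2*t*t*x1*y + 2*t*t*x0 + 2*t*t*x0*y
        + 2*t*t*x0*x1 + 2*t*t*x0*x1*y + 2*t*t*t + 4*t*t*t*y + 4*t*t*t*x1 + 6*t*t*t*x1*y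
        + 4*t*t*t*x0 + 6*t*t*t*x0*y + 6*t*t*t*x0*x1 + 8*t*t*t*x0*x1*y + 2*t*t*t*t*y
        + 1*t*t*t*t*x1 + 4*t*t*t*t*x1*y + 1*t*t*t*t*x0 + 4*t*t*t*t*x0*y + 4*t*t*t*t*x0*x1
        + 8*t*t*t*t*x0*x1*y) := by
    unfold Aval Dden; rw [htdef]; ring
  nlinarith [mul_pos ht ht, mul_nonneg (mul_nonneg ht.le ht.le) hy,
    mul_nonneg (mul_nonneg ht.le ht.le) h0, mul_nonneg (mul_nonneg ht.le ht.le) h1,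
    mul_nonneg (mul_nonneg (mul_nonneg ht.le ht.le) h0) h1,
    mul_nonneg (mul_nonneg (mul_nonneg ht.le ht.le) h0) hy,
    mul_nonneg (mul_nonneg (mul_nonneg ht.le ht.le) h1) hy,
    mul_nonneg (mul_nonneg (mul_nonneg (mul_nonneg ht.le ht.le) h0) h1) hy,
    mul_nonneg (mul_nonneg (mul_nonneg ht.le ht.le) ht.le) hy,
    mul_pos (mul_pos ht ht) ht,
    mul_nonneg (mul_nonneg (mul_nonneg ht.le ht.le) ht.le) h0,
    mul_nonneg (mul_nonneg (mul_nonneg ht.le ht.le) ht.le) h1,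
    mul_nonneg (mul_nonneg (mul_nonneg (mul_nonneg ht.le ht.le) ht.le) h0) h1,
    mul_nonneg (mul_nonneg (mul_nonneg (mul_nonneg ht.le ht.le) ht.le) h0) hy,
    mul_nonneg (mul_nonneg (mul_nonneg (mul_nonneg ht.le ht.le) ht.le) h1) hy,
    mul_nonneg (mul_nonneg (mul_nonneg (mul_nonneg (mul_nonneg ht.le ht.le) ht.le) h0) h1) hy,
    mul_nonneg (mul_nonneg (mul_nonneg (mul_nonneg ht.le ht.le) ht.le) ht.le) hy,
    mul_nonneg (mul_nonneg (mul_nonneg (mul_nonneg ht.le ht.le) ht.le) ht.le) h0,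
    mul_nonneg (mul_nonneg (mul_nonneg (mul_nonneg ht.le ht.le) ht.le) ht.le) h1,
    mul_nonneg (mul_nonneg (mul_nonneg (mul_nonneg (mul_nonneg ht.le ht.le) ht.le) ht.le) h0) h1,
    mul_nonneg (mul_nonneg (mul_nonneg (mul_nonneg (mul_nonneg ht.le ht.le) ht.le) ht.le) h0) hy,
    mul_nonneg (mul_nonneg (mul_nonneg (mul_nonneg (mul_nonneg ht.le ht.le) ht.le) ht.le) h1) hy,
    mul_nonneg (mul_nonneg (mul_nonneg (mul_nonneg (mul_nonneg (mul_nonneg ht.le ht.le) ht.le) ht.le) h0) h1) hy,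
    sub_pos.mpr hx]

lemma Amono (σ x0 x1 : ℝ) (h0 : 0 ≤ x0) (hx : x0 ≤ x1) : Aval σ x0 ≤ Aval σ x1 := by
  unfold Aval
  nlinarith [sq_nonneg σ, sq_nonneg (σ^2), mul_nonneg (sq_nonneg σ) h0,
    mul_nonneg (sq_nonneg (σ^2)) h0, sub_nonneg.mpr hx,
    mul_nonneg (mul_nonneg (sq_nonneg σ) h0) (sub_nonneg.mpr hx),
    mul_nonneg (mul_nonneg (sq_nonneg (σ^2)) h0) (sub_nonneg.mpr hx),
    mul_nonneg (sq_nonneg σ) (sub_nonneg.mpr hx),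
    mul_nonneg (sq_nonneg (σ^2)) (sub_nonneg.mpr hx)]


set_option maxHeartbeats 2000000 in
theorem stmt16 (σ lam c : ℝ) (hσ : 0 < σ) (hl0 : 0 < lam) (hl1 : lam < 1) (hc : 0 < c)
    (n0s n1s n0p n1p : ℝ)
    (hs0 : 0 < n0s) (hs1 : 0 < n1s) (hp0 : 0 < n0p) (hp1 : 0 < n1p)
    (hF : ∀ m0 m1 : ℝ, 0 ≤ m0 → 0 ≤ m1 →
      lam * VS σ m0 m1 + (1-lam) * VL σ m0 m1 - c*(m0+m1) ≤
      lam * VS σ n0s n1s + (1-lam) * VL σ n0s n1s - c*(n0s+n1s))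
    (hG : ∀ m0 m1 : ℝ, 0 ≤ m0 → 0 ≤ m1 →
      lam * VS σ m0 m1 + (1-lam) * VL σ m0 0 - c*(m0+m1) ≤
      lam * VS σ n0p n1p + (1-lam) * VL σ n0p 0 - c*(n0p+n1p)) :
    n0s < n0p ∧ n1p < n1s := by
  have ht : (0:ℝ) < σ^2 := by positivity
  have ht4 : (0:ℝ) < σ^4 := by positivity
  have hDa : 0 < Dden σ n0s n1s := Dpos σ n0s n1s hs0.le hs1.le
  have hDb : 0 < Dden σ n0p n1p := Dpos σ n0p n1p hp0.le hp1.le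
  have hDb0 : 0 < Dden σ n0p 0 := Dpos σ n0p 0 hp0.le le_rfl
  set Da := Dden σ n0s n1s with hDadef
  set Db := Dden σ n0p n1p with hDbdef
  set Db0 := Dden σ n0p 0 with hDb0def
  set PA := Aval σ n0s with hPAdef
  set PB := Aval σ n0p with hPBdef
  -- FOC in n1 at the first best
  have E2 : lam * PA + (1-lam) * (σ^4*(1+n0s)^2) = c * Da^2 := by
    have hd : HasDerivAt (fun z => lam * VS σ n0s z + (1-lam) * VL σ n0s z - c*(n0s+z))
        (lam * (PA/Da^2) + (1-lam) * (σ^4*(1+n0s)^2/Da^2) - c) n1s := by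
      have h1 := (hdVS1 σ n0s n1s hDa.ne').const_mul lam
      have h2 := (hdVL1 σ n0s n1s hDa.ne').const_mul (1-lam)
      have h3 : HasDerivAt (fun z : ℝ => c*(n0s+z)) c n1s := by
        simpa using ((hasDerivAt_id n1s).const_add n0s).const_mul c
      exact (h1.add h2).sub h3
    have hmax : ∀ᶠ z in nhds n1s,
        (fun z => lam * VS σ n0s z + (1-lam) * VL σ n0s z - c*(n0s+z)) z ≤
        (fun z => lam * VS σ n0s z + (1-lam) * VL σ n0s z - c*(n0s+z)) n1s := by
      filter_upwards [eventually_gt_nhds hs1] with z hz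
      exact hF n0s z hs0.le hz.le
    have h0 := IsLocalMax.hasDerivAt_eq_zero hmax hd
    have hne : Da^2 ≠ 0 := by positivity
    field_simp at h0
    linarith
  -- FOC in n0 at the first best
  have E1 : lam * σ^4 + (1-lam) * (σ^4*(1+n1s)^2) = c * Da^2 := by
    have hd : HasDerivAt (fun z => lam * VS σ z n1s + (1-lam) * VL σ z n1s - c*(z+n1s))
        (lam * (σ^4/Da^2) + (1-lam) * (σ^4*(1+n1s)^2/Da^2) - c) n0s := by
      have h1 := (hdVS0 σ n1s n0s hDa.ne').const_mul lam
      have h2 := (hdVL0 σ n1s n0s hDa.ne').const_mul (1-lam)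
      have h3 : HasDerivAt (fun z : ℝ => c*(z+n1s)) c n0s := by
        simpa using ((hasDerivAt_id n0s).add_const n1s).const_mul c
      exact (h1.add h2).sub h3
    have hmax : ∀ᶠ z in nhds n0s,
        (fun z => lam * VS σ z n1s + (1-lam) * VL σ z n1s - c*(z+n1s)) z ≤
        (fun z => lam * VS σ z n1s + (1-lam) * VL σ z n1s - c*(z+n1s)) n0s := by
      filter_upwards [eventually_gt_nhds hs0] with z hz
      exact hF z n1s hz.le hs1.le
    have h0 := IsLocalMax.hasDerivAt_eq_zero hmax hd
    field_simp at h0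
    linarith
  -- FOC in n1 at the second best
  have E4 : lam * PB = c * Db^2 := by
    have hd : HasDerivAt (fun z => lam * VS σ n0p z + (1-lam) * VL σ n0p 0 - c*(n0p+z))
        (lam * (PB/Db^2) - c) n1p := by
      have h1 := ((hdVS1 σ n0p n1p hDb.ne').const_mul lam).add_const ((1-lam) * VL σ n0p 0)
      have h3 : HasDerivAt (fun z : ℝ => c*(n0p+z)) c n1p := by
        simpa using ((hasDerivAt_id n1p).const_add n0p).const_mul c
      exact h1.sub h3
    have hmax : ∀ᶠ z in nhds n1p,
        (fun z => lam * VS σ n0p z + (1-lam) * VL σ n0p 0 - c*(n0p+z)) z ≤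
        (fun z => lam * VS σ n0p z + (1-lam) * VL σ n0p 0 - c*(n0p+z)) n1p := by
      filter_upwards [eventually_gt_nhds hp1] with z hz
      exact hG n0p z hp0.le hz.le
    have h0 := IsLocalMax.hasDerivAt_eq_zero hmax hd
    field_simp at h0
    linarith
  -- FOC in n0 at the second best
  have E3 : lam * σ^4 * Db0^2 + (1-lam) * σ^4 * Db^2 = c * (Db^2 * Db0^2) := by
    have hd : HasDerivAt (fun z => lam * VS σ z n1p + (1-lam) * VL σ z 0 - c*(z+n1p))
        (lam * (σ^4/Db^2) + (1-lam) * (σ^4*(1+0)^2/Db0^2) - c) n0p := by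
      have h1 := (hdVS0 σ n1p n0p hDb.ne').const_mul lam
      have h2 := (hdVL0 σ 0 n0p hDb0.ne').const_mul (1-lam)
      have h3 : HasDerivAt (fun z : ℝ => c*(z+n1p)) c n0p := by
        simpa using ((hasDerivAt_id n0p).add_const n1p).const_mul c
      exact (h1.add h2).sub h3
    have hmax : ∀ᶠ z in nhds n0p,
        (fun z => lam * VS σ z n1p + (1-lam) * VL σ z 0 - c*(z+n1p)) z ≤
        (fun z => lam * VS σ z n1p + (1-lam) * VL σ z 0 - c*(z+n1p)) n0p := by
      filter_upwards [eventually_gt_nhds hp0] with z hz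
      exact hG z n1p hz.le hp1.le
    have h0 := IsLocalMax.hasDerivAt_eq_zero hmax hd
    field_simp at h0
    nlinarith [h0, sq_nonneg Db, sq_nonneg Db0]
  -- (†) : lam (PB - σ⁴) > (1-lam) σ⁴ (1+n1p)²
  have q1 : lam * (PB - σ^4) * Db0^2 = (1-lam) * σ^4 * Db^2 := by
    have u : lam * PB * Db0^2 = c * (Db^2 * Db0^2) := by rw [E4]; ring
    linarith [E3, u]
  have hq : (1+n1p) * Db0 < Db := by
    rw [hDbdef, hDb0def]; unfold Dden
    nlinarith [mul_pos ht hp1, mul_pos (mul_pos ht hp1) hp0]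
  have hq2 : (1+n1p)^2 * Db0^2 < Db^2 := by nlinarith [hq, mul_pos (by positivity : (0:ℝ) < (1+n1p)) hDb0]
  have dagger : lam * (PB - σ^4) > (1-lam) * σ^4 * (1+n1p)^2 := by
    nlinarith [q1, sq_nonneg Db0, mul_pos hDb0 hDb0,
      mul_lt_mul_of_pos_left hq2 (mul_pos (by linarith : (0:ℝ) < 1-lam) ht4)]
  -- (‡) : lam (PA - σ⁴) < (1-lam) σ⁴ (1+n1s)²
  have ddagger : lam * (PA - σ^4) < (1-lam) * σ^4 * (1+n1s)^2 := by
    nlinarith [E1, E2, mul_pos (mul_pos (by linarith : (0:ℝ) < 1-lam) ht4)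
      (mul_pos (by linarith : (0:ℝ) < 1+n0s) (by linarith : (0:ℝ) < 1+n0s))]
  -- Step 1 : n0s < n0p
  have hb0 : n0s < n0p := by
    by_contra hcon
    push_neg at hcon
    have hApB : PB ≤ PA := Amono σ n0p n0s hp0.le hcon
    have hb1 : n1p < n1s := by
      by_contra hcon1
      push_neg at hcon1
      have h11 : (1+n1s)^2 ≤ (1+n1p)^2 := by nlinarith
      nlinarith [dagger, ddagger, mul_le_mul_of_nonneg_left hApB hl0.le,
        mul_le_mul_of_nonneg_left h11 (mul_nonneg (by linarith : (0:ℝ) ≤ 1-lam) ht4.le)]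
    -- contradiction from E1 vs E3
    have hDD : Db < Da := by
      rw [hDadef, hDbdef]; unfold Dden
      nlinarith [mul_pos ht (by linarith : (0:ℝ) < n1s - n1p),
        mul_nonneg ht.le (by linarith : (0:ℝ) ≤ n0s - n0p),
        mul_nonneg (mul_nonneg ht.le hp1.le) (by linarith : (0:ℝ) ≤ n0s - n0p),
        mul_nonneg (mul_nonneg ht.le hs0.le) (by linarith : (0:ℝ) ≤ n1s - n1p),
        mul_nonneg hp1.le (by linarith : (0:ℝ) ≤ n0s - n0p),
        mul_nonneg hs0.le (by linarith : (0:ℝ) ≤ n1s - n1p)]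
    have hDa1 : (1+n1s) * Db0 < Da := by
      rw [hDadef, hDb0def]; unfold Dden
      nlinarith [mul_pos (mul_pos ht hs1) (by linarith : (0:ℝ) < 1+n0s),
        mul_nonneg ht.le (by linarith : (0:ℝ) ≤ n0s - n0p),
        mul_nonneg (mul_nonneg ht.le hs1.le) (by linarith : (0:ℝ) ≤ n0s - n0p),
        mul_nonneg hs1.le (by linarith : (0:ℝ) ≤ n0s - n0p),
        (by linarith : (0:ℝ) ≤ n0s - n0p)]
    have h1 : Db^2 < Da^2 := by nlinarith
    have h2 : (1+n1s)^2 * Db0^2 < Da^2 := by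
      nlinarith [hDa1, mul_pos (by positivity : (0:ℝ) < (1+n1s)) hDb0]
    have u1 : c*Da^2*(Db^2*Db0^2) = (lam*σ^4 + (1-lam)*(σ^4*(1+n1s)^2))*(Db^2*Db0^2) := by
      rw [E1]
    have u2 : c*(Db^2*Db0^2)*Da^2 = (lam*σ^4*Db0^2 + (1-lam)*σ^4*Db^2)*Da^2 := by
      rw [E3]
    nlinarith [u1, u2, mul_pos hDb0 hDb0, mul_pos hDb hDb,
      mul_lt_mul_of_pos_left h1 (mul_pos (mul_pos hl0 ht4) (mul_pos hDb0 hDb0)),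
      mul_lt_mul_of_pos_left h2 (mul_pos (mul_pos (by linarith : (0:ℝ) < 1-lam) ht4) (mul_pos hDb hDb))]
  -- Step 2 : n1p < n1s
  refine ⟨hb0, ?_⟩
  by_contra hcon1
  push_neg at hcon1
  have hDba : 0 < Dden σ n0p n1s := Dpos σ n0p n1s hp0.le hs1.le
  set Dba := Dden σ n0p n1s with hDbadef
  have hmono : Dba ≤ Db := by
    rw [hDbadef, hDbdef]; unfold Dden
    nlinarith [mul_nonneg ht.le (by linarith : (0:ℝ) ≤ n1p - n1s),
      mul_nonneg (mul_nonneg ht.le hp0.le) (by linarith : (0:ℝ) ≤ n1p - n1s),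
      mul_nonneg hp0.le (by linarith : (0:ℝ) ≤ n1p - n1s),
      (by linarith : (0:ℝ) ≤ n1p - n1s)]
    
  have hr : PB * Da^2 < PA * Dba^2 := ratio_mono σ n0s n0p n1s hσ hs0.le hs1.le hb0
  have w1 : c * Dba^2 ≤ lam * PB := by
    rw [E4]
    have hsq : Dba^2 ≤ Db^2 := by nlinarith [hmono, hDba, hDb]
    exact mul_le_mul_of_nonneg_left hsq hc.le
  have w2 : lam * PB * Da^2 < lam * PA * Dba^2 := by
    nlinarith [mul_lt_mul_of_pos_left hr hl0]
  have w3 : lam * PA < c * Da^2 := by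
    nlinarith [E2, mul_pos (mul_pos (by linarith : (0:ℝ) < 1-lam) ht4)
      (mul_pos (by linarith : (0:ℝ) < 1+n0s) (by linarith : (0:ℝ) < 1+n0s))]
  nlinarith [mul_le_mul_of_nonneg_right w1 (sq_nonneg Da),
    mul_lt_mul_of_pos_right w3 (by positivity : (0:ℝ) < Dba^2), w2]
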